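/- For every integer s ≥ 3, the characteristic polynomial det(X·I − A) of the adjacency matrix A of F₁(s) over ℝ equals (X+2)·(X+1)^{s−2}·(X−1)^{s}·(X³ − (2s−1)X − 2). Equivalently, the spectrum of F₁(s) consists of one copy of −2, s−2 copies of −1, s copies of 1, and the three roots of x³ − (2s−1)x − 2. -/

import Mathlib

/-- Vertex type of the graph `F₁(s)`. -/
inductive F1Vert (s : ℕ) : Type
  | v1 : F1Vert s
  | v2 : F1Vert s
  | a1 : F1Vert s
  | a2 : F1Vert s
  | u : Fin s → F1Vert s
  | p : {i : Fin s // 2 ≤ (i : ℕ)} → F1Vert s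
  deriving DecidableEq, Fintype

/-- Base relation generating the edges of `F₁(s)` (indices are 0-based: `u 0 = u₁`, …;
pendant vertices `p i` exist for `i ≥ 2`, i.e. at each of `u₃, …, u_s`). -/
def F1Rel (s : ℕ) : F1Vert s → F1Vert s → Prop
  | .v2, .u _ => True
  | .v1, .u i => 2 ≤ (i : ℕ)
  | .v1, .a1 => True
  | .a1, .u i => (i : ℕ) = 0
  | .v1, .a2 => True
  | .a2, .u i => (i : ℕ) = 1
  | .u i, .p j => i = j.1
  | _, _ => False

/-- The graph `F₁(s)`: obtained from `K_{2,s}` with parts `{v₁, v₂}` and `{u₁, …, u_s}` by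
subdividing the edges `v₁u₁` and `v₁u₂` (creating `a₁`, `a₂`) and attaching a pendant edge
(to `p_i`) at each of `u₃, …, u_s`. -/
def F1 (s : ℕ) : SimpleGraph (F1Vert s) := SimpleGraph.fromRel (F1Rel s)
noncomputable instance (s : ℕ) : DecidableRel (F1 s).Adj := Classical.decRel _

namespace F1proof
open Matrix Finset Polynomial

variable {s : ℕ}

def vertEquiv (s : ℕ) : F1Vert s ≃ (Fin s ⊕ ({i : Fin s // 2 ≤ (i:ℕ)} ⊕ (Unit ⊕ Unit ⊕ Unit ⊕ Unit))) where
  toFun v := match v with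
    | .u i => .inl i
    | .p j => .inr (.inl j)
    | .v1 => .inr (.inr (.inl ()))
    | .v2 => .inr (.inr (.inr (.inl ())))
    | .a1 => .inr (.inr (.inr (.inr (.inl ()))))
    | .a2 => .inr (.inr (.inr (.inr (.inr ()))))
  invFun v := match v with
    | .inl i => .u i
    | .inr (.inl j) => .p j
    | .inr (.inr (.inl _)) => .v1
    | .inr (.inr (.inr (.inl _))) => .v2
    | .inr (.inr (.inr (.inr (.inl _)))) => .a1
    | .inr (.inr (.inr (.inr (.inr _)))) => .a2
  left_inv v := by cases v <;> rfl
  right_inv v := by rcases v with i | j | ⟨⟩ | ⟨⟩ | ⟨⟩ | ⟨⟩ <;> rfl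

lemma sum_F1Vert {M : Type*} [AddCommMonoid M] (f : F1Vert s → M) :
    ∑ v, f v = (∑ i : Fin s, f (.u i)) + ((∑ j : {i : Fin s // 2 ≤ (i:ℕ)}, f (.p j))
      + (f .v1 + (f .v2 + (f .a1 + f .a2)))) := by
  rw [← (vertEquiv s).symm.sum_comp f]
  simp [Fintype.sum_sum_type, vertEquiv]

lemma prod_F1Vert {M : Type*} [CommMonoid M] (f : F1Vert s → M) :
    ∏ v, f v = (∏ i : Fin s, f (.u i)) * ((∏ j : {i : Fin s // 2 ≤ (i:ℕ)}, f (.p j))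
      * (f .v1 * (f .v2 * (f .a1 * f .a2)))) := by
  rw [← (vertEquiv s).symm.prod_comp f]
  simp [Fintype.prod_sum_type, vertEquiv]

lemma sum_ite_le {M : Type*} [CommSemiring M] (hs : 2 ≤ s) (a b : M) :
    ∑ i : Fin s, (if 2 ≤ (i:ℕ) then a else b) = (s-2 : ℕ) * a + 2 * b := by
  rw [Fin.sum_univ_eq_sum_range (fun n => if 2 ≤ n then a else b)]
  induction s, hs using Nat.le_induction with
  | base => simp [Finset.sum_range_succ, two_mul]
  | succ n hn ih =>
    rw [Finset.sum_range_succ, ih, if_pos (by omega)]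
    have h2 : n + 1 - 2 = (n - 2) + 1 := by omega
    rw [h2]
    push_cast
    ring

lemma card_ge2 : (univ.filter (fun i : Fin s => 2 ≤ (i:ℕ))).card = s - 2 := by
  rcases Nat.lt_or_ge s 2 with h | h
  · interval_cases s <;> rfl
  · have h1 := sum_ite_le (M := ℕ) (s := s) h 1 0
    rw [Finset.card_filter, h1]
    simp

lemma sum_subtype_pick {M : Type*} [AddCommMonoid M]
    (f : {i : Fin s // 2 ≤ (i:ℕ)} → M) (i : Fin s) :
    ∑ j : {i : Fin s // 2 ≤ (i:ℕ)}, (if i = j.1 then f j else 0)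
      = if h : 2 ≤ (i:ℕ) then f ⟨i,h⟩ else 0 := by
  split_ifs with h
  · rw [Finset.sum_eq_single ⟨i,h⟩]
    · simp
    · rintro j _ hj
      rw [if_neg]
      intro he
      exact hj (by ext; exact he.symm ▸ rfl)
    · simp
  · apply Finset.sum_eq_zero
    rintro ⟨j, hj⟩ _
    rw [if_neg]
    rintro rfl
    exact h hj


noncomputable def dd (x : ℝ) : ℝ := x - 1/x
noncomputable def D2 (s : ℕ) (x : ℝ) : ℝ := x - s / dd x
noncomputable def Bv (s : ℕ) (x : ℝ) : ℝ := -(((s:ℝ)-2) / dd x) - 2/(x * dd x)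
noncomputable def A1 (s : ℕ) (x : ℝ) : ℝ := x - 2/x - ((s:ℝ)-2)/dd x - 2/(x^2 * dd x)

noncomputable def Lm (s : ℕ) (x : ℝ) : Matrix (F1Vert s) (F1Vert s) ℝ := fun i j =>
  (if i = j then 1 else 0) +
  match i, j with
  | .u i, .p j => if i = j.1 then -1/x else 0
  | .v1, .a1 => -1/x
  | .v1, .a2 => -1/x
  | .u i, .a1 => if (i:ℕ) = 0 then -1/x else 0
  | .u i, .a2 => if (i:ℕ) = 1 then -1/x else 0
  | .v1, .u i => if 2 ≤ (i:ℕ) then -1/dd x else -1/(x * dd x)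
  | .v2, .u _ => -1/dd x
  | .v1, .v2 => Bv s x / D2 s x
  | _, _ => 0

noncomputable def Um (s : ℕ) (x : ℝ) : Matrix (F1Vert s) (F1Vert s) ℝ := fun i j =>
  match i, j with
  | .p j, .p j' => if j = j' then x else 0
  | .p j, .u i => if (j.1 : Fin s) = i then -1 else 0
  | .a1, .a1 => x
  | .a2, .a2 => x
  | .a1, .v1 => -1
  | .a2, .v1 => -1
  | .a1, .u i => if (i:ℕ) = 0 then -1 else 0
  | .a2, .u i => if (i:ℕ) = 1 then -1 else 0
  | .u i, .u i' => if i = i' then dd x else 0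
  | .u i, .v1 => if 2 ≤ (i:ℕ) then -1 else -1/x
  | .u _, .v2 => -1
  | .v2, .v2 => D2 s x
  | .v2, .v1 => Bv s x
  | .v1, .v1 => A1 s x - (Bv s x)^2 / D2 s x
  | _, _ => 0

def rk : F1Vert s → ℕ
  | .p j => (j.1 : ℕ)
  | .a1 => s
  | .a2 => s+1
  | .u i => s+2+(i:ℕ)
  | .v2 => 2*s+2
  | .v1 => 2*s+3

lemma rk_inj : Function.Injective (rk (s := s)) := by
  intro a b h
  cases a <;> cases b <;>
    first
      | rfl
      | (exfalso; simp only [rk] at h; omega)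
      | (simp only [rk] at h
         first
           | exact congrArg _ (Fin.ext (by omega))
           | exact congrArg _ (Subtype.ext (Fin.ext (by omega))))

lemma Um_triangular (x : ℝ) : (Um s x).BlockTriangular rk := by
  intro i j hij
  cases i <;> cases j <;>
    first
      | rfl
      | (exfalso; simp only [rk] at hij; omega)
      | (simp only [rk] at hij
         simp only [Um]
         rw [if_neg]
         rintro rfl
         omega)

lemma Lm_triangular (x : ℝ) : (Lm s x)ᵀ.BlockTriangular rk := by
  intro i j hij
  simp only [Matrix.transpose_apply]
  cases i <;> cases j <;>
    first
      | (exfalso; simp only [rk] at hij; omega)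
      | (simp only [rk] at hij
         simp only [Lm]
         rw [if_neg, add_zero]
         intro he
         first
           | exact F1Vert.noConfusion he
           | (injection he; done)
           | (injection he with he'
              first
                | (rw [Fin.ext_iff] at he'; omega)
                | (rw [Subtype.ext_iff, Fin.ext_iff] at he'; omega)))

lemma det_triangular {n : Type*} [Fintype n] [DecidableEq n] {R : Type*} [CommRing R]
    (M : Matrix n n R) (b : n → ℕ) (hb : Function.Injective b)
    (h : M.BlockTriangular b) : M.det = ∏ i, M i i := by
  rw [h.det, Finset.prod_image (fun i _ j _ hij => hb hij)]
  refine Finset.prod_congr rfl fun i _ => ?_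
  haveI : Unique {j // b j = b i} := ⟨⟨⟨i, rfl⟩⟩, fun j => Subtype.ext (hb j.2)⟩
  rw [Matrix.det_unique]
  have hd : ((default : {j // b j = b i}) : n) = i := hb (default : {j // b j = b i}).2
  simp only [Matrix.toSquareBlock_def, Matrix.of_apply]
  rw [hd]


lemma myNegIte {α : Type*} [Neg α] {P : Prop} [Decidable P] (a b : α) :
    -(ite P a b) = ite P (-a) (-b) := by split_ifs <;> rfl

lemma ite_ite_comm_zero {α : Type*} [Zero α] {P Q : Prop} [Decidable P] [Decidable Q]
    (a b : α) : ite P (ite Q a 0) (ite Q b 0) = ite Q (ite P a b) 0 := by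
  split_ifs <;> rfl

@[simp] lemma ite_ite_same {α : Type*} {P : Prop} [Decidable P] (a b c : α) :
    ite P (ite P a b) c = ite P a c := by split_ifs <;> rfl
@[simp] lemma ite_ite_same' {α : Type*} {P : Prop} [Decidable P] (a b c : α) :
    ite P a (ite P b c) = ite P a c := by split_ifs <;> rfl

lemma sum_subtype_pick' {M : Type*} [AddCommMonoid M]
    (f : {i : Fin s // 2 ≤ (i:ℕ)} → M) (i : Fin s) :
    ∑ j : {i : Fin s // 2 ≤ (i:ℕ)}, (if (j : Fin s) = i then f j else 0)
      = if h : 2 ≤ (i:ℕ) then f ⟨i,h⟩ else 0 := by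
  rw [← sum_subtype_pick f i]
  refine Finset.sum_congr rfl fun j _ => ?_
  congr 1
  simp [eq_comm]

set_option maxHeartbeats 2000000 in
lemma LU_eq (x : ℝ) (hs : 3 ≤ s) (hx : x ≠ 0) (h2 : x^2 - 1 ≠ 0)
    (h3 : x^3 - ((s:ℝ)+1)*x ≠ 0) :
    x • (1 : Matrix (F1Vert s) (F1Vert s) ℝ) - (F1 s).adjMatrix ℝ = Lm s x * Um s x := by
  have hs2 : 2 ≤ s := by omega
  have hdde : dd x = (x^2-1)/x := by unfold dd; field_simp
  have hD2e : D2 s x = (x^3 - ((s:ℝ)+1)*x)/(x^2-1) := by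
    unfold D2; rw [hdde]; field_simp; ring
  have hBve : Bv s x = (-(((s:ℝ)-2)*x) - 2)/(x^2-1) := by
    unfold Bv; rw [hdde]; field_simp
  have hA1e : A1 s x = (x^4 - ((s:ℝ)+1)*x^2)/(x*(x^2-1)) := by
    unfold A1; rw [hdde]; field_simp; ring
  have h5 : x^2 - ((s:ℝ)+1) ≠ 0 := fun h => h3 (by linear_combination x * h)
  ext i j
  rw [Matrix.mul_apply, sum_F1Vert]
  simp only [Matrix.sub_apply, SimpleGraph.adjMatrix_apply]
  cases i <;> cases j <;>
    simp only [Matrix.sub_apply, Matrix.smul_apply, Matrix.one_apply, smul_eq_mul,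
      SimpleGraph.adjMatrix_apply, F1, SimpleGraph.fromRel_adj, F1Rel, Lm, Um,
      mul_ite, mul_zero, mul_one, mul_neg, neg_mul, neg_neg, boole_mul, mul_boole,
      myNegIte, ite_ite_comm_zero, ite_mul, neg_zero, one_mul,
      not_true, not_false_eq_true, false_and, and_false, true_or, or_true, or_self,
      add_mul, zero_mul, Finset.sum_add_distrib, zero_add, add_zero,
      Finset.sum_ite_eq, Finset.sum_ite_eq', Finset.mem_univ, if_true,
      Finset.sum_const, Finset.card_univ, Fintype.card_fin, nsmul_eq_mul,
      sum_subtype_pick, sum_subtype_pick', sum_ite_le hs2,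
      F1Vert.u.injEq, F1Vert.p.injEq, ite_ite_same, ite_ite_same',
      Finset.sum_const_zero, ne_eq, reduceCtorEq, not_false_iff, true_and, and_true,
      iff_true, iff_false, or_false, false_or, if_false, if_true]
  all_goals
    try simp only [Subtype.ext_iff, Fin.ext_iff]
  all_goals
    try push_cast [Nat.cast_sub hs2]
  all_goals
    try simp only [hA1e, hBve, hD2e, hdde]
  all_goals
    first
      | (split_ifs <;>
          first
            | omega
            | rfl
            | (field_simp; ring)
            | (field_simp [hx, h2, h3]; ring)
            | field_simp [hx, h2, h3]
            | ring)
      | omega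
      | rfl
      | (field_simp [hx, h2, h3]; ring)
      | field_simp [hx, h2, h3]
      | ring

lemma Lm_det (x : ℝ) : (Lm s x).det = 1 := by
  rw [← Matrix.det_transpose, det_triangular _ rk rk_inj (Lm_triangular x)]
  apply Finset.prod_eq_one
  intro i _
  cases i <;> simp [Lm, Matrix.transpose_apply]

lemma Um_det (x : ℝ) : (Um s x).det =
    (dd x)^s * ((x^(s-2)) * ((A1 s x - (Bv s x)^2/D2 s x) * (D2 s x * (x * x)))) := by
  rw [det_triangular _ rk rk_inj (Um_triangular x), prod_F1Vert]
  have hu : ∀ i : Fin s, Um s x (.u i) (.u i) = dd x := by intro i; simp [Um]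
  have hp : ∀ j : {i : Fin s // 2 ≤ (i:ℕ)}, Um s x (.p j) (.p j) = x := by intro j; simp [Um]
  simp only [hu, hp]
  rw [Finset.prod_const, Finset.prod_const, Finset.card_univ, Finset.card_univ,
    Fintype.card_fin, Fintype.card_subtype, card_ge2]
  rfl

lemma eval_charpoly {n : Type*} [Fintype n] [DecidableEq n] (M : Matrix n n ℝ) (x : ℝ) :
    (M.charpoly).eval x = (x • (1 : Matrix n n ℝ) - M).det := by
  have h := RingHom.map_det (Polynomial.evalRingHom x) (Matrix.charmatrix M)
  have h2 : (Matrix.charmatrix M).map (Polynomial.evalRingHom x)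
      = x • (1 : Matrix n n ℝ) - M := by
    ext i j
    by_cases hij : i = j
    · subst hij
      simp [Matrix.charmatrix_apply_eq, Matrix.map_apply, Matrix.sub_apply,
        Matrix.smul_apply, Matrix.one_apply]
    · simp [Matrix.charmatrix_apply_ne _ _ _ hij, Matrix.map_apply, Matrix.sub_apply,
        Matrix.smul_apply, Matrix.one_apply, hij]
  rw [Matrix.charpoly] at *
  rw [← h2]
  exact h.symm ▸ rfl

lemma dd_eq {x : ℝ} (hx : x ≠ 0) : dd x = (x^2-1)/x := by
  unfold dd; field_simp

lemma D2_eq {x : ℝ} (hx : x ≠ 0) (h2 : x^2 - 1 ≠ 0) :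
    D2 s x = (x^3 - ((s:ℝ)+1)*x)/(x^2-1) := by
  unfold D2; rw [dd_eq hx]; field_simp; ring

lemma Bv_eq {x : ℝ} (hx : x ≠ 0) (h2 : x^2 - 1 ≠ 0) :
    Bv s x = (-(((s:ℝ)-2)*x) - 2)/(x^2-1) := by
  unfold Bv; rw [dd_eq hx]; field_simp

lemma A1_eq {x : ℝ} (hx : x ≠ 0) (h2 : x^2 - 1 ≠ 0) :
    A1 s x = (x^4 - ((s:ℝ)+1)*x^2)/(x*(x^2-1)) := by
  unfold A1; rw [dd_eq hx]; field_simp; ring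

end F1proof

open Polynomial in
/-- for every integer `s ≥ 3`, the characteristic polynomial
`det (X • I - A)` of the adjacency matrix `A` of `F₁(s)` over `ℝ` equals
`(X + 2) (X + 1)^(s - 2) (X - 1)^s (X³ - (2s - 1)·X - 2)`. -/
theorem charpoly_F1 (s : ℕ) (hs : 3 ≤ s) :
    ((F1 s).adjMatrix ℝ).charpoly =
      (X + 2) * (X + 1) ^ (s - 2) * (X - 1) ^ s *
        (X ^ 3 - C (2 * (s : ℝ) - 1) * X - 2) := by
  apply Polynomial.eq_of_infinite_eval_eq
  refine ((Set.Ioi_infinite ((s:ℝ)+2)).mono ?_)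
  intro x hx
  simp only [Set.mem_setOf_eq]
  rw [Set.mem_Ioi] at hx
  have hs3 : (3:ℝ) ≤ (s:ℝ) := by exact_mod_cast hs
  have hx1 : (1:ℝ) < x := by linarith
  have hx0 : x ≠ 0 := by intro h; rw [h] at hx1; norm_num at hx1
  have h2 : x^2 - 1 ≠ 0 := ne_of_gt (by nlinarith)
  have hxpos : (0:ℝ) < x := by linarith
  have hsq : (s:ℝ)+1 < x^2 := by nlinarith
  have h3 : x^3 - ((s:ℝ)+1)*x ≠ 0 := by
    have hp := mul_pos hxpos (sub_pos.mpr hsq)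
    exact ne_of_gt (by nlinarith [hp])
  rw [F1proof.eval_charpoly, F1proof.LU_eq x hs hx0 h2 h3, Matrix.det_mul,
    F1proof.Lm_det, F1proof.Um_det, one_mul]
  simp only [Polynomial.eval_mul, Polynomial.eval_add, Polynomial.eval_sub,
    Polynomial.eval_pow, Polynomial.eval_X, Polynomial.eval_C, Polynomial.eval_ofNat,
    Polynomial.eval_one]
  have key : (x+1)^2 * ((F1proof.A1 s x - (F1proof.Bv s x)^2 / F1proof.D2 s x)
      * F1proof.D2 s x) = (x+2)*(x^3 - (2*(s:ℝ)-1)*x - 2) := by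
    rw [F1proof.A1_eq hx0 h2, F1proof.Bv_eq hx0 h2, F1proof.D2_eq hx0 h2]
    have h5 : x^2 - ((s:ℝ)+1) ≠ 0 := by linarith
    field_simp
    ring
  have hd : F1proof.dd x ^ s * x^s = ((x-1)*(x+1))^s := by
    rw [F1proof.dd_eq hx0, div_pow, div_mul_cancel₀ _ (pow_ne_zero _ hx0),
      show x^2-1 = (x-1)*(x+1) from by ring]
  obtain ⟨t, rfl⟩ : ∃ t, s = t+2 := ⟨s-2, by omega⟩
  simp only [Nat.add_sub_cancel] at *
  push_cast at *
  calc F1proof.dd x ^ (t + 2) * (x ^ t * ((F1proof.A1 (t + 2) x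
          - F1proof.Bv (t + 2) x ^ 2 / F1proof.D2 (t + 2) x) * (F1proof.D2 (t + 2) x * (x * x))))
      = (F1proof.dd x ^ (t+2) * x^(t+2)) * ((F1proof.A1 (t + 2) x
          - F1proof.Bv (t + 2) x ^ 2 / F1proof.D2 (t + 2) x) * F1proof.D2 (t + 2) x) := by ring
    _ = ((x-1)*(x+1))^(t+2) * ((F1proof.A1 (t + 2) x
          - F1proof.Bv (t + 2) x ^ 2 / F1proof.D2 (t + 2) x) * F1proof.D2 (t + 2) x) := by rw [hd]
    _ = (x-1)^(t+2) * (x+1)^t * ((x+1)^2 * ((F1proof.A1 (t + 2) x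
          - F1proof.Bv (t + 2) x ^ 2 / F1proof.D2 (t + 2) x) * F1proof.D2 (t + 2) x)) := by
          rw [mul_pow]; ring
    _ = (x-1)^(t+2) * (x+1)^t * ((x + 2) * (x ^ 3 - (2 * ((t:ℝ) + 2) - 1) * x - 2)) := by
          rw [key]
    _ = (x + 2) * (x + 1) ^ t * (x - 1) ^ (t + 2)
          * (x ^ 3 - (2 * ((t:ℝ) + 2) - 1) * x - 2) := by ring
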